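/- Partial-fraction identity over 𝔽_q: Σ_{(μ,ν)∈𝔽_q×𝔽_q, μ≠ν} [∏_{i∈U}(x_i+μ) · ∏_{j∈V}(x_j+ν)] / [(z+μ)(z+ν)] = − Σ_{(I,J)} Σ_{μ∈𝔽_q} [∏_{k∈I}(x_k+μ)] / (z+μ), where the outer sum on the right-hand side runs over all pairs (I,J) of disjoint subsets of Σ with I ∪ J = Σ such that |J| ≡ 1 (mod q−1) and (J ⊆ U or J ⊆ V). -/

import Mathlib

open Finset

-- nat aux
lemma nat_aux (n k : ℕ) (hn : 2 ≤ n) : n ∣ (n - 1 + k) ↔ k % n = 1 := by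
  rw [Nat.dvd_iff_mod_eq_zero]
  have hk : k % n < n := Nat.mod_lt _ (by omega)
  have h1 : (n - 1 + k) % n = (n - 1 + k % n) % n := by
    rw [Nat.add_mod, Nat.mod_eq_of_lt (by omega : n - 1 < n)]
  rw [h1]
  rcases Nat.eq_or_lt_of_le (Nat.zero_le (k % n)) with h0 | h0
  · rw [← h0]
    simp only [Nat.add_zero]
    rw [Nat.mod_eq_of_lt (by omega)]
    omega
  · have : n - 1 + k % n = n + (k % n - 1) := by omega
    rw [this, Nat.add_mod_left, Nat.mod_eq_of_lt (by omega)]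
    omega

lemma char_sum (F : Type*) [Field F] [Fintype F] [DecidableEq F] (k : ℕ) :
    ∑ ν ∈ (univ : Finset F) \ {0}, ν ^ k =
      if (Fintype.card F - 1) ∣ k then -1 else 0 := by
  rw [← FiniteField.sum_pow_units F k]
  have himg : ((univ : Finset Fˣ).image (Units.val)) = (univ : Finset F) \ {0} := by
    ext a
    simp only [mem_image, mem_univ, true_and, mem_sdiff, mem_singleton]
    constructor
    · rintro ⟨u, rfl⟩; exact u.ne_zero
    · intro ha; exact ⟨Units.mk0 a ha, rfl⟩
  rw [← himg, Finset.sum_image (fun a _ b _ h => Units.ext h)]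


lemma offDiag_sum {α M : Type*} [DecidableEq α] [AddCommMonoid M] (s : Finset α)
    (f : α × α → M) :
    ∑ p ∈ s.offDiag, f p = ∑ μ ∈ s, ∑ ν ∈ s \ {μ}, f (μ, ν) := by
  rw [show s.offDiag = (s ×ˢ s).filter (fun a : α × α => a.fst ≠ a.snd) from by ext; simp [and_assoc], Finset.sum_filter, Finset.sum_product]
  refine Finset.sum_congr rfl (fun μ _ => ?_)
  rw [← Finset.sum_filter]
  refine Finset.sum_congr ?_ (fun _ _ => rfl)
  ext a; simp [ne_comm, and_comm]

lemma lemB {F L ι : Type*} [Field F] [Fintype F] [DecidableEq F]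
    [Field L] [Algebra F L] [DecidableEq ι]
    (hq2 : 2 < Fintype.card F) (W : Finset ι) (x : ι → L) (μ : F) :
    ∑ J ∈ W.powerset.filter (fun J => J.card % (Fintype.card F - 1) = 1),
        ∏ i ∈ W \ J, (x i + algebraMap F L μ) =
      - ∑ l ∈ (univ : Finset F) \ {μ}, (algebraMap F L l - algebraMap F L μ)⁻¹ *
          ∏ i ∈ W, (x i + algebraMap F L l) := by
  set φ := algebraMap F L with hφ
  set q := Fintype.card F with hqdef
  have step1 : ∑ l ∈ (univ : Finset F) \ {μ}, (φ l - φ μ)⁻¹ * ∏ i ∈ W, (x i + φ l)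
      = ∑ ν ∈ (univ : Finset F) \ {0}, φ (ν⁻¹) * ∏ i ∈ W, (x i + φ (μ + ν)) := by
    refine Finset.sum_nbij' (fun l => l - μ) (fun ν => μ + ν) ?_ ?_ ?_ ?_ ?_
    · intro a ha; simp only [mem_sdiff, mem_singleton] at ha ⊢
      exact ⟨Finset.mem_univ _, sub_ne_zero.mpr ha.2⟩
    · intro a ha; simp only [mem_sdiff, mem_singleton] at ha ⊢
      refine ⟨Finset.mem_univ _, fun h => ha.2 ?_⟩; linear_combination h
    · intro a _; ring
    · intro a _; ring
    · intro a _
      rw [map_inv₀, map_sub, show μ + (a - μ) = a from by ring]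
  have step2 : ∀ ν : F, ∏ i ∈ W, (x i + φ (μ + ν))
      = ∑ t ∈ W.powerset, (φ ν) ^ t.card * ∏ i ∈ W \ t, (x i + φ μ) := by
    intro ν
    rw [show (fun i => x i + φ (μ + ν)) = fun i => (φ ν) + (x i + φ μ) by
      funext i; rw [map_add]; ring]
    rw [Finset.prod_add]
    exact Finset.sum_congr rfl (fun t _ => by rw [Finset.prod_const])
  have step3 : ∑ ν ∈ (univ : Finset F) \ {0}, φ (ν⁻¹) * ∏ i ∈ W, (x i + φ (μ + ν))
      = ∑ t ∈ W.powerset, (if t.card % (q - 1) = 1 then (-1:L) else 0) *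
          ∏ i ∈ W \ t, (x i + φ μ) := by
    rw [Finset.sum_congr rfl (fun ν _ => by rw [step2 ν, Finset.mul_sum])]
    rw [Finset.sum_comm]
    refine Finset.sum_congr rfl (fun t _ => ?_)
    have hpt : ∀ ν ∈ (univ : Finset F) \ {0},
        φ (ν⁻¹) * ((φ ν) ^ t.card * ∏ i ∈ W \ t, (x i + φ μ))
        = φ (ν ^ (q - 1 - 1 + t.card)) * ∏ i ∈ W \ t, (x i + φ μ) := by
      intro ν hν
      simp only [mem_sdiff, mem_singleton, mem_univ, true_and] at hν
      have hmul : ν ^ (q - 2) * ν = 1 := by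
        rw [← pow_succ, show q - 2 + 1 = q - 1 by omega]
        exact FiniteField.pow_card_sub_one_eq_one ν hν
      have hinv : ν⁻¹ = ν ^ (q - 2) := (eq_inv_of_mul_eq_one_left hmul).symm
      rw [hinv, show q - 1 - 1 + t.card = (q - 2) + t.card by omega, pow_add,
        map_mul, map_pow, map_pow]
      ring
    rw [Finset.sum_congr rfl hpt, ← Finset.sum_mul, ← map_sum,
      char_sum F (q - 1 - 1 + t.card)]
    simp only [← hqdef, nat_aux (q - 1) (t.card) (by omega : 2 ≤ q - 1)]
    split_ifs <;> simp
  rw [step1, step3, Finset.sum_filter, ← Finset.sum_neg_distrib]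
  exact Finset.sum_congr rfl (fun t _ => by split_ifs <;> simp)

/-- Partial-fraction identity over `𝔽_q`. -/
theorem stmt_5 {F L ι : Type*} [Field F] [Fintype F] [DecidableEq F]
    [Field L] [Algebra F L] [DecidableEq ι]
    (p q e : ℕ) (hp : p.Prime) (he : 0 < e) (hq : q = p ^ e) (hq2 : 2 < q)
    (hF : Fintype.card F = q)
    (S U V : Finset ι) (hdisj : Disjoint U V) (hUV : U ∪ V = S)
    (x : ι → L) (z : L) (hz : z ∉ Set.range (algebraMap F L)) :
    ∑ μν ∈ (Finset.univ : Finset F).offDiag,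
        ((∏ i ∈ U, (x i + algebraMap F L μν.1)) *
            ∏ j ∈ V, (x j + algebraMap F L μν.2)) /
          ((z + algebraMap F L μν.1) * (z + algebraMap F L μν.2)) =
      - ∑ J ∈ S.powerset.filter
            (fun J => J.card % (q - 1) = 1 % (q - 1) ∧ (J ⊆ U ∨ J ⊆ V)),
          ∑ μ : F, (∏ k ∈ S \ J, (x k + algebraMap F L μ)) / (z + algebraMap F L μ) := by
  subst hF
  set φ := algebraMap F L with hφ
  set q := Fintype.card F with hqdef
  have hq1 : 1 % (q - 1) = 1 := Nat.one_mod_eq_one.mpr (by omega)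
  have hinj : Function.Injective φ := φ.injective
  have hne : ∀ μ : F, z + φ μ ≠ 0 := by
    intro μ h
    exact hz ⟨-μ, by rw [map_neg]; exact (eq_neg_of_add_eq_zero_left h).symm⟩
  have hsub : ∀ {μ ν : F}, μ ≠ ν → φ ν - φ μ ≠ 0 := by
    intro μ ν h hh
    exact h (hinj (sub_eq_zero.mp hh)).symm
  simp only [hq1, div_eq_mul_inv]
  -- the common middle expression
  set T : L := ∑ q ∈ (Finset.univ : Finset F).offDiag,
      ((∏ i ∈ U, (x i + φ q.2)) * ∏ j ∈ V, (x j + φ q.1) +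
        (∏ i ∈ U, (x i + φ q.1)) * ∏ j ∈ V, (x j + φ q.2)) *
        ((φ q.2 - φ q.1)⁻¹ * (z + φ q.1)⁻¹) with hT
  have hswap : ∀ (f : F × F → L), ∑ r ∈ (Finset.univ : Finset F).offDiag, f r
      = ∑ r ∈ (Finset.univ : Finset F).offDiag, f r.swap := by
    intro f
    refine Finset.sum_nbij' Prod.swap Prod.swap ?_ ?_ ?_ ?_ ?_ <;>
      simp [Finset.mem_offDiag, ne_comm] <;> tauto
  -- LHS = T
  have hLHS : ∑ μν ∈ (Finset.univ : Finset F).offDiag,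
      ((∏ i ∈ U, (x i + φ μν.1)) * ∏ j ∈ V, (x j + φ μν.2)) *
        ((z + φ μν.1) * (z + φ μν.2))⁻¹ = T := by
    have hpt : ∀ r ∈ (Finset.univ : Finset F).offDiag,
        ((∏ i ∈ U, (x i + φ r.1)) * ∏ j ∈ V, (x j + φ r.2)) *
          ((z + φ r.1) * (z + φ r.2))⁻¹
        = ((∏ i ∈ U, (x i + φ r.1)) * ∏ j ∈ V, (x j + φ r.2)) *
            ((φ r.2 - φ r.1)⁻¹ * (z + φ r.1)⁻¹)
          - ((∏ i ∈ U, (x i + φ r.1)) * ∏ j ∈ V, (x j + φ r.2)) *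
            ((φ r.2 - φ r.1)⁻¹ * (z + φ r.2)⁻¹) := by
      intro r hr
      have hr' := (Finset.mem_offDiag.mp hr).2.2
      have h1 := hne r.1
      have h2 := hne r.2
      have h3 := hsub hr'
      field_simp
      ring
    rw [Finset.sum_congr rfl hpt, Finset.sum_sub_distrib]
    rw [hswap (fun r => ((∏ i ∈ U, (x i + φ r.1)) * ∏ j ∈ V, (x j + φ r.2)) *
            ((φ r.2 - φ r.1)⁻¹ * (z + φ r.2)⁻¹))]
    rw [hT, ← Finset.sum_sub_distrib]
    refine Finset.sum_congr rfl fun r hr => ?_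
    have hr' := (Finset.mem_offDiag.mp hr).2.2
    simp only [Prod.fst_swap, Prod.snd_swap]
    rw [show φ r.1 - φ r.2 = -(φ r.2 - φ r.1) from by ring, inv_neg]
    ring
  rw [hLHS]
  -- RHS = T
  have hfilter : S.powerset.filter
        (fun J => J.card % (q - 1) = 1 ∧ (J ⊆ U ∨ J ⊆ V))
      = (U.powerset.filter (fun J => J.card % (q - 1) = 1)) ∪
        (V.powerset.filter (fun J => J.card % (q - 1) = 1)) := by
    ext J
    simp only [Finset.mem_filter, Finset.mem_powerset, Finset.mem_union]
    constructor
    · rintro ⟨hJS, hc, h | h⟩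
      exacts [Or.inl ⟨h, hc⟩, Or.inr ⟨h, hc⟩]
    · rintro (⟨h, hc⟩ | ⟨h, hc⟩)
      · exact ⟨h.trans (hUV ▸ Finset.subset_union_left), hc, Or.inl h⟩
      · exact ⟨h.trans (hUV ▸ Finset.subset_union_right), hc, Or.inr h⟩
  have hdisjf : Disjoint (U.powerset.filter (fun J => J.card % (q - 1) = 1))
      (V.powerset.filter (fun J => J.card % (q - 1) = 1)) := by
    rw [Finset.disjoint_left]
    intro J hJ1 hJ2
    simp only [Finset.mem_filter, Finset.mem_powerset] at hJ1 hJ2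
    have hJ : J = ∅ := by
      apply Finset.subset_empty.mp
      rw [← Finset.disjoint_iff_inter_eq_empty.mp hdisj]
      exact Finset.subset_inter hJ1.1 hJ2.1
    rw [hJ] at hJ1
    simp only [Finset.card_empty, Nat.zero_mod] at hJ1
    omega
  rw [hfilter, Finset.sum_union hdisjf]
  -- product splitting
  have hprodU : ∀ J ⊆ U, ∀ μ : F, ∏ k ∈ S \ J, (x k + φ μ)
      = (∏ k ∈ U \ J, (x k + φ μ)) * ∏ j ∈ V, (x j + φ μ) := by
    intro J hJ μ
    rw [← hUV, Finset.union_sdiff_distrib,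
      Finset.sdiff_eq_self_of_disjoint (Finset.disjoint_of_subset_right hJ hdisj.symm),
      Finset.prod_union (Finset.disjoint_of_subset_left Finset.sdiff_subset hdisj)]
  have hprodV : ∀ J ⊆ V, ∀ μ : F, ∏ k ∈ S \ J, (x k + φ μ)
      = (∏ k ∈ V \ J, (x k + φ μ)) * ∏ i ∈ U, (x i + φ μ) := by
    intro J hJ μ
    rw [← hUV, Finset.union_sdiff_distrib,
      Finset.sdiff_eq_self_of_disjoint (Finset.disjoint_of_subset_right hJ hdisj),
      Finset.prod_union (Finset.disjoint_of_subset_right Finset.sdiff_subset hdisj),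
      mul_comm]
  have hSU : ∑ J ∈ U.powerset.filter (fun J => J.card % (q - 1) = 1),
        ∑ μ : F, (∏ k ∈ S \ J, (x k + φ μ)) * (z + φ μ)⁻¹
      = ∑ μ : F, (- ∑ l ∈ (Finset.univ : Finset F) \ {μ}, (φ l - φ μ)⁻¹ *
            ∏ i ∈ U, (x i + φ l)) *
          ((∏ j ∈ V, (x j + φ μ)) * (z + φ μ)⁻¹) := by
    rw [Finset.sum_comm]
    refine Finset.sum_congr rfl fun μ _ => ?_
    rw [← lemB (by omega) U x μ, Finset.sum_mul]
    refine Finset.sum_congr rfl fun J hJ => ?_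
    have hJU : J ⊆ U := Finset.mem_powerset.mp (Finset.mem_filter.mp hJ).1
    rw [hprodU J hJU μ]
    ring
  have hSV : ∑ J ∈ V.powerset.filter (fun J => J.card % (q - 1) = 1),
        ∑ μ : F, (∏ k ∈ S \ J, (x k + φ μ)) * (z + φ μ)⁻¹
      = ∑ μ : F, (- ∑ l ∈ (Finset.univ : Finset F) \ {μ}, (φ l - φ μ)⁻¹ *
            ∏ j ∈ V, (x j + φ l)) *
          ((∏ i ∈ U, (x i + φ μ)) * (z + φ μ)⁻¹) := by
    rw [Finset.sum_comm]
    refine Finset.sum_congr rfl fun μ _ => ?_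
    rw [← lemB (by omega) V x μ, Finset.sum_mul]
    refine Finset.sum_congr rfl fun J hJ => ?_
    have hJV : J ⊆ V := Finset.mem_powerset.mp (Finset.mem_filter.mp hJ).1
    rw [hprodV J hJV μ]
    ring
  rw [hSU, hSV, hT]
  rw [offDiag_sum]
  rw [← Finset.sum_add_distrib, ← Finset.sum_neg_distrib]
  refine Finset.sum_congr rfl fun μ _ => ?_
  simp only [neg_mul, neg_add_rev, neg_neg]
  rw [Finset.sum_mul, Finset.sum_mul, ← Finset.sum_add_distrib]
  refine Finset.sum_congr rfl fun l _ => ?_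
  ring
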